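/- Let (X,S,T) be a minimal system with commuting transformations S and T such that Q_S(X) ∩ Q_T(X) = Δ_X (the diagonal). Then R_S(X) = Δ_X. -/

import Mathlib

def hpow {X : Type*} [TopologicalSpace X] (S : X ≃ₜ X) (n : ℤ) : X → X :=
  ⇑(S.toEquiv ^ n)

variable {X : Type*} [TopologicalSpace X]

def cube (S T : X ≃ₜ X) : Set (X × X × X × X) :=
  closure {p | ∃ (x : X) (n m : ℤ),
    p = (x, hpow S n x, hpow T m x, hpow S n (hpow T m x))}

def cube2 (S : X ≃ₜ X) : Set (X × X) :=
  closure {p | ∃ (x : X) (n : ℤ), p = (x, hpow S n x)}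

def relS (S T : X ≃ₜ X) : Set (X × X) :=
  {p | ∃ a : X, (p.1, p.2, a, a) ∈ cube S T}

def relT (S T : X ≃ₜ X) : Set (X × X) :=
  {p | ∃ b : X, (p.1, b, p.2, b) ∈ cube S T}

def minimalST (S T : X ≃ₜ X) : Prop :=
  ∀ x : X, Dense {y : X | ∃ n m : ℤ, y = hpow S n (hpow T m x)}

def minimal1 (S : X ≃ₜ X) : Prop :=
  ∀ x : X, Dense {y : X | ∃ n : ℤ, y = hpow S n x}

def distalST {Y : Type*} [MetricSpace Y] (S T : Y ≃ₜ Y) : Prop :=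
  ∀ x y : Y, x ≠ y → ∃ ε > 0, ∀ n m : ℤ,
    ε ≤ dist (hpow S n (hpow T m x)) (hpow S n (hpow T m y))

def proxT {Y : Type*} [MetricSpace Y] (T : Y ≃ₜ Y) : Set (Y × Y) :=
  {p | ∀ ε > 0, ∃ m : ℤ, dist (hpow T m p.1) (hpow T m p.2) < ε}

section aux

theorem hpow_zero (S : X ≃ₜ X) (x : X) : hpow S 0 x = x := by
  simp [hpow]

theorem hpow_add (S : X ≃ₜ X) (n m : ℤ) (x : X) :
    hpow S (n + m) x = hpow S n (hpow S m x) := by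
  simp [hpow, zpow_add]

theorem hpow_one (S : X ≃ₜ X) (x : X) : hpow S 1 x = S x := by
  simp [hpow]

theorem hpow_neg_one (S : X ≃ₜ X) (x : X) : hpow S (-1) x = S.symm x := by
  simp [hpow, Equiv.Perm.inv_def]

theorem hpow_continuous (S : X ≃ₜ X) (n : ℤ) : Continuous (hpow S n) := by
  induction n using Int.induction_on with
  | zero => simpa [hpow] using continuous_id
  | succ k ih =>
      have hfun : hpow S ((k : ℤ) + 1) = fun x => hpow S k (S x) := by
        funext x
        rw [hpow_add S k 1 x, hpow_one]
      rw [hfun]; exact ih.comp S.continuous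
  | pred k ih =>
      have hfun : hpow S (-(k : ℤ) - 1) = fun x => hpow S (-k) (S.symm x) := by
        funext x
        rw [show (-(k:ℤ) - 1) = (-(k:ℤ)) + (-1) by ring, hpow_add, hpow_neg_one]
      rw [hfun]; exact ih.comp S.symm.continuous

theorem hpow_comm (S T : X ≃ₜ X) (hST : ∀ x, S (T x) = T (S x))
    (n m : ℤ) (x : X) : hpow S n (hpow T m x) = hpow T m (hpow S n x) := by
  have hc : Commute S.toEquiv T.toEquiv := by
    show S.toEquiv * T.toEquiv = T.toEquiv * S.toEquiv
    apply Equiv.ext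
    intro y
    simpa [Equiv.Perm.mul_apply] using hST y
  have hz : Commute (S.toEquiv ^ n) (T.toEquiv ^ m) := (hc.zpow_left n).zpow_right m
  have := congrArg (fun (g : Equiv.Perm X) => g x) hz
  simpa [hpow, Equiv.Perm.mul_apply] using this

/-- `cube2` is symmetric. -/
theorem cube2_symm (S : X ≃ₜ X) {u v : X} (huv : (u, v) ∈ cube2 S) :
    (v, u) ∈ cube2 S := by
  have hc : Continuous fun q : X × X => (q.2, q.1) := continuous_snd.prodMk continuous_fst
  exact map_mem_closure (f := fun q : X × X => (q.2, q.1)) hc huv (by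
    rintro q ⟨z, n, rfl⟩
    refine ⟨hpow S n z, -n, ?_⟩
    have hz : hpow S (-n) (hpow S n z) = z := by
      rw [← hpow_add]; simp [hpow_zero]
    rw [hz])

end aux

theorem stmt7 {X : Type*} [MetricSpace X] [CompactSpace X] (S T : X ≃ₜ X)
    (hST : ∀ x, S (T x) = T (S x)) (hmin : minimalST S T)
    (h : cube2 S ∩ cube2 T = Set.diagonal X) :
    relS S T = Set.diagonal X := by
  have comm := hpow_comm S T hST
  apply Set.Subset.antisymm
  · rintro ⟨u, v⟩ ⟨a, ha⟩
    -- Step A : (u, v) ∈ cube2 S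
    have hA : (u, v) ∈ cube2 S := by
      have hc : Continuous fun p : X × X × X × X => (p.1, p.2.1) :=
        continuous_fst.prodMk (continuous_fst.comp continuous_snd)
      exact map_mem_closure (f := fun p : X × X × X × X => (p.1, p.2.1)) hc ha
        (by rintro p ⟨z, n, k, rfl⟩; exact ⟨z, n, rfl⟩)
    -- The set Ω = {b | (u,v,b,b) ∈ cube S T} is T-invariant
    have hΩT : ∀ (m : ℤ) (b : X), (u, v, b, b) ∈ cube S T →
        (u, v, hpow T m b, hpow T m b) ∈ cube S T := by
      intro m b hb
      have hc : Continuous fun p : X × X × X × X =>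
          (p.1, p.2.1, hpow T m p.2.2.1, hpow T m p.2.2.2) :=
        continuous_fst.prodMk ((continuous_fst.comp continuous_snd).prodMk
          (((hpow_continuous T m).comp
              (continuous_fst.comp (continuous_snd.comp continuous_snd))).prodMk
            ((hpow_continuous T m).comp
              (continuous_snd.comp (continuous_snd.comp continuous_snd)))))
      exact map_mem_closure (f := fun p : X × X × X × X =>
          (p.1, p.2.1, hpow T m p.2.2.1, hpow T m p.2.2.2)) hc hb (by
        rintro p ⟨z, n, k, rfl⟩
        refine ⟨z, n, m + k, ?_⟩
        rw [hpow_add T m k, comm n m (hpow T k z)])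
    -- transport of cube2 S under (T^m, S^n T^m)
    have hKmem : ∀ (b w : X), (b, w) ∈ cube2 S →
        ∀ n m : ℤ, (hpow T m b, hpow S n (hpow T m w)) ∈ cube2 S := by
      intro b w hbw n m
      have hc : Continuous fun q : X × X => (hpow T m q.1, hpow S n (hpow T m q.2)) :=
        ((hpow_continuous T m).comp continuous_fst).prodMk
          (((hpow_continuous S n).comp (hpow_continuous T m)).comp continuous_snd)
      exact map_mem_closure
        (f := fun q : X × X => (hpow T m q.1, hpow S n (hpow T m q.2))) hc hbw (by
        rintro q ⟨z, k, rfl⟩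
        refine ⟨hpow T m z, n + k, ?_⟩
        rw [hpow_add S n k, comm k m z])
    -- the key compact invariant set
    set K : Set (X × X) := cube2 S ∩ {p : X × X | (u, v, p.1, p.1) ∈ cube S T} with hK
    have hKclosed : IsClosed K := by
      refine isClosed_closure.inter (IsClosed.preimage ?_ (isClosed_closure))
      exact continuous_const.prodMk (continuous_const.prodMk
        (continuous_fst.prodMk continuous_fst))
    have hKa : ((a, a) : X × X) ∈ K :=
      ⟨subset_closure ⟨a, 0, by rw [hpow_zero]⟩, ha⟩
    have hPclosed : IsClosed (Prod.snd '' K) :=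
      (hKclosed.isCompact.image continuous_snd).isClosed
    have hPinv : ∀ (n m : ℤ) (w : X), w ∈ Prod.snd '' K →
        hpow S n (hpow T m w) ∈ Prod.snd '' K := by
      rintro n m w ⟨⟨b, w'⟩, ⟨hbw, hbΩ⟩, rfl⟩
      exact ⟨(hpow T m b, hpow S n (hpow T m w')),
        ⟨hKmem b w' hbw n m, hΩT m b hbΩ⟩, rfl⟩
    have hPuniv : Prod.snd '' K = Set.univ := by
      have hdense : Dense (Prod.snd '' K) := by
        refine (hmin a).mono ?_
        rintro y ⟨n, m, rfl⟩
        exact hPinv n m a ⟨(a, a), hKa, rfl⟩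
      calc Prod.snd '' K = closure (Prod.snd '' K) := hPclosed.closure_eq.symm
        _ = Set.univ := hdense.closure_eq
    obtain ⟨⟨b, u'⟩, ⟨hbu, hbΩ⟩, hsnd⟩ : u ∈ Prod.snd '' K := by
      rw [hPuniv]; trivial
    have hu' : u' = u := hsnd
    subst hu'
    -- (u, b) ∈ cube2 S
    have h1 : (u', b) ∈ cube2 S := cube2_symm S hbu
    -- (u, b) ∈ cube2 T via coordinates (1,3)
    have h2 : (u', b) ∈ cube2 T := by
      have hc : Continuous fun p : X × X × X × X => (p.1, p.2.2.1) :=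
        continuous_fst.prodMk (continuous_fst.comp (continuous_snd.comp continuous_snd))
      exact map_mem_closure (f := fun p : X × X × X × X => (p.1, p.2.2.1)) hc hbΩ
        (by rintro p ⟨z, n, k, rfl⟩; exact ⟨z, k, rfl⟩)
    have hub : u' = b := by
      have : (u', b) ∈ Set.diagonal X := by rw [← h]; exact ⟨h1, h2⟩
      exact this
    -- (v, b) ∈ cube2 T via coordinates (2,4)
    have h3 : (v, b) ∈ cube2 T := by
      have hc : Continuous fun p : X × X × X × X => (p.2.1, p.2.2.2) :=
        (continuous_fst.comp continuous_snd).prodMk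
          (continuous_snd.comp (continuous_snd.comp continuous_snd))
      exact map_mem_closure (f := fun p : X × X × X × X => (p.2.1, p.2.2.2)) hc hbΩ (by
        rintro p ⟨z, n, k, rfl⟩
        exact ⟨hpow S n z, k, by rw [comm n k z]⟩)
    have h4 : (v, u') ∈ cube2 S := cube2_symm S hA
    have h5 : (v, u') ∈ cube2 T := by rw [hub]; exact h3
    have hvu : (v, u') ∈ Set.diagonal X := by rw [← h]; exact ⟨h4, h5⟩
    exact (show v = u' from hvu).symm
  · rintro ⟨u, v⟩ huv
    have huv' : u = v := huv
    subst huv'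
    exact ⟨u, subset_closure ⟨u, 0, 0, by simp [hpow_zero]⟩⟩
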